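/- The generating function ∑_{k≥0} c_{2,k}(q) tᵏ equals 1/((1−qt)(1−q²t)), where c_{2,k}(q) is the number of simultaneous similarity classes of commuting k-tuples of 2×2 matrices over 𝔽_q (with c_{2,0} = 1). -/

import Mathlib

/-- The set of `k`-tuples of pairwise commuting `2 × 2` matrices over `F`. -/
def CommTuple₂ (F : Type) [Field F] (k : ℕ) : Type :=
  {v : Fin k → Matrix (Fin 2) (Fin 2) F // ∀ i j, Commute (v i) (v j)}

/-- Simultaneous conjugation by `GL₂(F)`. -/
def simConj₂ (F : Type) [Field F] (k : ℕ) (v w : CommTuple₂ F k) : Prop :=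
  ∃ g : GL (Fin 2) F, ∀ i, (g : Matrix (Fin 2) (Fin 2) F) * v.1 i *
    ((g⁻¹ : GL (Fin 2) F) : Matrix (Fin 2) (Fin 2) F) = w.1 i

section Aux
variable {F : Type} [Field F]

local notation "M₂" => Matrix (Fin 2) (Fin 2) F

/-- scalar matrices -/
def IsSc (A : M₂) : Prop := ∃ c : F, A = c • (1 : M₂)

lemma isSc_iff {A : M₂} : IsSc A ↔ A 0 1 = 0 ∧ A 1 0 = 0 ∧ A 0 0 = A 1 1 := by
  constructor
  · rintro ⟨c, rfl⟩
    simp [Matrix.smul_apply, Matrix.one_apply]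
  · rintro ⟨h1, h2, h3⟩
    refine ⟨A 0 0, ?_⟩
    ext i j
    fin_cases i <;> fin_cases j <;>
      simp [Matrix.smul_apply, Matrix.one_apply, h1, h2, h3.symm] <;> tauto

lemma commute_of_nonscalar {A B : M₂} (hA : ¬ IsSc A) (h : A * B = B * A) :
    ∃ a b : F, B = a • (1 : M₂) + b • A := by
  have e00 := congrFun (congrFun h 0) 0
  have e01 := congrFun (congrFun h 0) 1
  have e10 := congrFun (congrFun h 1) 0
  have e11 := congrFun (congrFun h 1) 1
  simp [Matrix.mul_apply, Fin.sum_univ_two] at e00 e01 e10 e11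
  rw [isSc_iff] at hA
  push_neg at hA
  by_cases hb : A 0 1 ≠ 0
  · refine ⟨B 0 0 - (B 0 1 / A 0 1) * A 0 0, B 0 1 / A 0 1, ?_⟩
    ext i j
    fin_cases i <;> fin_cases j <;>
      simp [Matrix.smul_apply, Matrix.one_apply] <;> field_simp <;>
      first
        | linear_combination e00
        | linear_combination e01
        | linear_combination -e00
        | linear_combination -e01
  push_neg at hb
  by_cases hc : A 1 0 ≠ 0
  · refine ⟨B 0 0 - (B 1 0 / A 1 0) * A 0 0, B 1 0 / A 1 0, ?_⟩
    ext i j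
    fin_cases i <;> fin_cases j <;>
      simp [Matrix.smul_apply, Matrix.one_apply] <;> field_simp <;>
      first
        | linear_combination e00
        | linear_combination e10
        | linear_combination -e00
        | linear_combination -e10
  push_neg at hc
  have hd : A 0 0 ≠ A 1 1 := hA hb hc
  have hd' : A 0 0 - A 1 1 ≠ 0 := sub_ne_zero.mpr hd
  refine ⟨B 0 0 - ((B 0 0 - B 1 1)/(A 0 0 - A 1 1)) * A 0 0, (B 0 0 - B 1 1)/(A 0 0 - A 1 1), ?_⟩
  have hf : B 0 1 = 0 := by
    have h' : B 0 1 * (A 0 0 - A 1 1) = 0 := by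
      linear_combination e01 + (B 0 0 - B 1 1) * hb
    rcases mul_eq_zero.mp h' with h' | h'
    · exact h'
    · exact absurd (sub_eq_zero.mp h') hd
  have hg : B 1 0 = 0 := by
    have h' : B 1 0 * (A 0 0 - A 1 1) = 0 := by
      linear_combination -e10 + (B 0 0 - B 1 1) * hc
    rcases mul_eq_zero.mp h' with h' | h'
    · exact h'
    · exact absurd (sub_eq_zero.mp h') hd
  ext i j
  fin_cases i <;> fin_cases j <;>
    simp [Matrix.smul_apply, Matrix.one_apply, hb, hc, hf, hg] <;> field_simp <;> ring

lemma coeff_unique {A : M₂} (hA : ¬ IsSc A) {a b a' b' : F}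
    (h : a • (1:M₂) + b • A = a' • (1:M₂) + b' • A) : a = a' ∧ b = b' := by
  by_cases hbb : b = b'
  · subst hbb
    have := congrFun (congrFun h 0) 0
    simp [Matrix.smul_apply, Matrix.one_apply] at this
    exact ⟨this, rfl⟩
  · exfalso
    apply hA
    refine ⟨(a - a') / (b' - b), ?_⟩
    have hbb' : b' - b ≠ 0 := sub_ne_zero.mpr (Ne.symm hbb)
    ext i j
    have := congrFun (congrFun h i) j
    rcases eq_or_ne i j with hij | hij
    · subst hij
      simp only [Matrix.smul_apply, Matrix.add_apply, Matrix.one_apply_eq,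
        smul_eq_mul, mul_one] at this ⊢
      field_simp
      first
        | linear_combination this
        | linear_combination -this
        | linear_combination 2 * this
        | linear_combination -2 * this
    · simp only [Matrix.smul_apply, Matrix.add_apply, Matrix.one_apply_ne hij,
        smul_eq_mul, mul_zero, zero_add] at this ⊢
      have hz : A i j * (b' - b) = 0 := by linear_combination -this
      exact (mul_eq_zero.mp hz).resolve_right hbb'

/-- companion matrix of `X² - tX + d` -/
def comp (t d : F) : M₂ := !![0, -d; 1, t]

lemma comp_nonsc (t d : F) : ¬ IsSc (comp t d) := by
  rw [isSc_iff]
  simp [comp]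

lemma comp_trace (t d : F) : comp t d 0 0 + comp t d 1 1 = t := by simp [comp]

lemma comp_det (t d : F) : (comp t d).det = d := by simp [comp, Matrix.det_fin_two]

lemma conj_comp {A : M₂} (hA : ¬ IsSc A) :
    ∃ g : GL (Fin 2) F, (g : M₂) * comp (A 0 0 + A 1 1) A.det *
      ((g⁻¹ : GL (Fin 2) F) : M₂) = A := by
  rw [isSc_iff] at hA
  push_neg at hA
  have key : ∀ g : M₂, g.det ≠ 0 → g * comp (A 0 0 + A 1 1) A.det = A * g →
      ∃ u : GL (Fin 2) F, (u : M₂) * comp (A 0 0 + A 1 1) A.det *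
        ((u⁻¹ : GL (Fin 2) F) : M₂) = A := by
    intro g hg he
    obtain ⟨u, hu⟩ := (Matrix.isUnit_iff_isUnit_det g).mpr (isUnit_iff_ne_zero.mpr hg)
    refine ⟨u, ?_⟩
    rw [Units.mul_inv_eq_iff_eq_mul, hu, he]
  by_cases hc : A 1 0 ≠ 0
  · refine key !![1, A 0 0; 0, A 1 0] (by simpa [Matrix.det_fin_two] using hc) ?_
    ext i j
    fin_cases i <;> fin_cases j <;>
      simp [Matrix.mul_apply, Fin.sum_univ_two, comp, Matrix.det_fin_two] <;> ring
  push_neg at hc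
  by_cases hb : A 0 1 ≠ 0
  · refine key !![0, A 0 1; 1, A 1 1] (by simpa [Matrix.det_fin_two] using hb) ?_
    ext i j
    fin_cases i <;> fin_cases j <;>
      simp [Matrix.mul_apply, Fin.sum_univ_two, comp, Matrix.det_fin_two] <;> ring
  push_neg at hb
  have hd : A 0 0 ≠ A 1 1 := hA hb hc
  refine key !![1, A 0 0; 1, A 1 1] ?_ ?_
  · intro h
    rw [Matrix.det_fin_two] at h
    exact hd (by simp at h; linear_combination -h)
  · ext i j
    fin_cases i <;> fin_cases j <;>
      simp [Matrix.mul_apply, Fin.sum_univ_two, comp, Matrix.det_fin_two, hb, hc] <;> ring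


lemma comm_lin (a b a' b' : F) (C : M₂) :
    (a • (1:M₂) + b • C) * (a' • (1:M₂) + b' • C) =
    (a' • (1:M₂) + b' • C) * (a • (1:M₂) + b • C) := by
  simp only [add_mul, mul_add, smul_mul_smul, one_mul, mul_one]
  ring_nf
  rw [mul_comm a a', mul_comm b b']
  abel

open Classical in
noncomputable def ab (A B : M₂) : F × F :=
  if h : ¬ IsSc A ∧ A * B = B * A then
    (Classical.choose (commute_of_nonscalar h.1 h.2),
     Classical.choose (Classical.choose_spec (commute_of_nonscalar h.1 h.2)))
  else (0, 0)

lemma ab_spec {A B : M₂} (hA : ¬ IsSc A) (h : A * B = B * A) :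
    B = (ab A B).1 • (1:M₂) + (ab A B).2 • A := by
  rw [ab]
  rw [dif_pos ⟨hA, h⟩]
  exact Classical.choose_spec (Classical.choose_spec (commute_of_nonscalar hA h))

lemma ab_eq {A B : M₂} (hA : ¬ IsSc A) {a b : F} (h : B = a • (1:M₂) + b • A) :
    ab A B = (a, b) := by
  have hc : A * B = B * A := by
    subst h
    have := comm_lin (F := F) 0 1 a b A
    simpa using this
  have hs := ab_spec hA hc
  obtain ⟨h1, h2⟩ := coeff_unique hA (hs.symm.trans h)
  exact Prod.ext h1 h2

lemma gginv (g : GL (Fin 2) F) : (g : M₂) * ((g⁻¹ : GL (Fin 2) F) : M₂) = 1 :=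
  g.mul_inv

lemma ginvg (g : GL (Fin 2) F) : ((g⁻¹ : GL (Fin 2) F) : M₂) * (g : M₂) = 1 :=
  g.inv_mul

lemma conj_smul_one (g : GL (Fin 2) F) (c : F) :
    (g : M₂) * (c • (1:M₂)) * ((g⁻¹ : GL (Fin 2) F) : M₂) = c • (1:M₂) := by
  rw [mul_smul_comm, smul_mul_assoc, mul_one, gginv]

lemma conj_lin (g : GL (Fin 2) F) (a b : F) (A : M₂) :
    (g : M₂) * (a • (1:M₂) + b • A) * ((g⁻¹ : GL (Fin 2) F) : M₂) =
      a • (1:M₂) + b • ((g : M₂) * A * ((g⁻¹ : GL (Fin 2) F) : M₂)) := by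
  rw [mul_add, add_mul]
  rw [show (g : M₂) * (a • (1:M₂)) * ((g⁻¹ : GL (Fin 2) F) : M₂) = a • (1:M₂) from
    conj_smul_one g a]
  rw [mul_smul_comm, smul_mul_assoc]

lemma conj_of_isSc (g : GL (Fin 2) F) {A : M₂} (h : IsSc A) :
    (g : M₂) * A * ((g⁻¹ : GL (Fin 2) F) : M₂) = A := by
  obtain ⟨c, rfl⟩ := h
  exact conj_smul_one g c

lemma isSc_conj_iff (g : GL (Fin 2) F) (A : M₂) :
    IsSc ((g : M₂) * A * ((g⁻¹ : GL (Fin 2) F) : M₂)) ↔ IsSc A := by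
  constructor
  · intro h
    have hA : A = ((g⁻¹ : GL (Fin 2) F) : M₂) *
        ((g : M₂) * A * ((g⁻¹ : GL (Fin 2) F) : M₂)) * (g : M₂) := by
      simp only [← mul_assoc]
      rw [ginvg, one_mul, mul_assoc, ginvg, mul_one]
    obtain ⟨c, hc⟩ := h
    refine ⟨c, ?_⟩
    rw [hA, hc, mul_smul_comm, smul_mul_assoc, mul_one, ginvg]
  · intro h
    rw [conj_of_isSc g h]
    exact h

lemma trace_conj (g : GL (Fin 2) F) (A : M₂) :
    ((g : M₂) * A * ((g⁻¹ : GL (Fin 2) F) : M₂)) 0 0 +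
      ((g : M₂) * A * ((g⁻¹ : GL (Fin 2) F) : M₂)) 1 1 = A 0 0 + A 1 1 := by
  have h := Matrix.trace_mul_cycle (g : M₂) A ((g⁻¹ : GL (Fin 2) F) : M₂)
  rw [ginvg, one_mul] at h
  simpa [Matrix.trace_fin_two] using h

lemma det_conj (g : GL (Fin 2) F) (A : M₂) :
    ((g : M₂) * A * ((g⁻¹ : GL (Fin 2) F) : M₂)).det = A.det := by
  have h1 : ((g : M₂)).det * (((g⁻¹ : GL (Fin 2) F) : M₂)).det = 1 := by
    rw [← Matrix.det_mul, gginv, Matrix.det_one]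
  rw [Matrix.det_mul, Matrix.det_mul]
  linear_combination A.det * h1


variable (F) in
abbrev TData (k : ℕ) : Type :=
  (Fin k → F) ⊕
    (Σ i₀ : Fin k, ({j : Fin k // j < i₀} → F) × (F × F) ×
      ({j : Fin k // i₀ < j} → F × F))

def findOpt {n : ℕ} (p : Fin n → Prop) [DecidablePred p] : Option (Fin n) :=
  if h : ∃ k, p k then some (Fin.find p h) else none

lemma findOpt_eq_none_iff {n : ℕ} {p : Fin n → Prop} [DecidablePred p] :
    findOpt p = none ↔ ∀ i, ¬ p i := by
  unfold findOpt
  split_ifs with h <;> simp_all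

lemma findOpt_eq_some_iff {n : ℕ} {p : Fin n → Prop} [DecidablePred p] {i : Fin n} :
    findOpt p = some i ↔ p i ∧ ∀ j, p j → i ≤ j := by
  unfold findOpt
  split_ifs with h
  · rw [Option.some_inj, Fin.find_eq_iff]
    constructor
    · rintro ⟨a, b⟩
      exact ⟨a, fun j hj => not_lt.mp fun hl => b j hl hj⟩
    · rintro ⟨a, b⟩
      exact ⟨a, fun j hl hj => absurd (b j hj) (not_le.mpr hl)⟩
  · simp only [reduceCtorEq, false_iff]
    push_neg at h
    exact fun ⟨a, _⟩ => h i a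

open Classical in
noncomputable def Phi {k : ℕ} (v : CommTuple₂ F k) : TData F k :=
  match findOpt (fun i => ¬ IsSc (v.1 i)) with
  | none => Sum.inl fun i => v.1 i 0 0
  | some i₀ => Sum.inr ⟨i₀, fun j => v.1 j.1 0 0,
      (v.1 i₀ 0 0 + v.1 i₀ 1 1, (v.1 i₀).det),
      fun j => ab (v.1 i₀) (v.1 j.1)⟩

def psiFun {k : ℕ} (d : TData F k) : Fin k → M₂ :=
  match d with
  | Sum.inl c => fun i => c i • 1
  | Sum.inr ⟨i₀, pre, td, post⟩ => fun j =>
      if h : j < i₀ then pre ⟨j, h⟩ • 1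
      else if h' : i₀ < j then (post ⟨j, h'⟩).1 • (1:M₂) + (post ⟨j, h'⟩).2 • comp td.1 td.2
      else comp td.1 td.2

lemma psiFun_inl {k : ℕ} (c : Fin k → F) (i : Fin k) :
    psiFun (Sum.inl c : TData F k) i = c i • 1 := rfl

lemma psiFun_lt {k : ℕ} {i₀ : Fin k} (pre : {j : Fin k // j < i₀} → F) (td : F × F)
    (post : {j : Fin k // i₀ < j} → F × F) {j : Fin k} (h : j < i₀) :
    psiFun (Sum.inr ⟨i₀, pre, td, post⟩ : TData F k) j = pre ⟨j, h⟩ • 1 := by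
  simp [psiFun, h]

lemma psiFun_self {k : ℕ} {i₀ : Fin k} (pre : {j : Fin k // j < i₀} → F) (td : F × F)
    (post : {j : Fin k // i₀ < j} → F × F) :
    psiFun (Sum.inr ⟨i₀, pre, td, post⟩ : TData F k) i₀ = comp td.1 td.2 := by
  simp [psiFun, lt_irrefl]

lemma psiFun_gt {k : ℕ} {i₀ : Fin k} (pre : {j : Fin k // j < i₀} → F) (td : F × F)
    (post : {j : Fin k // i₀ < j} → F × F) {j : Fin k} (h : i₀ < j) :
    psiFun (Sum.inr ⟨i₀, pre, td, post⟩ : TData F k) j =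
      (post ⟨j, h⟩).1 • (1:M₂) + (post ⟨j, h⟩).2 • comp td.1 td.2 := by
  simp [psiFun, h, not_lt.mpr h.le]

lemma psiFun_lin {k : ℕ} (d : TData F k) :
    ∃ C : M₂, ∀ j, ∃ a b : F, psiFun d j = a • (1:M₂) + b • C := by
  rcases d with c | ⟨i₀, pre, td, post⟩
  · exact ⟨1, fun j => ⟨c j, 0, by simp [psiFun]⟩⟩
  · refine ⟨comp td.1 td.2, fun j => ?_⟩
    rcases lt_trichotomy j i₀ with h | h | h
    · exact ⟨pre ⟨j, h⟩, 0, by simp [psiFun, h]⟩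
    · exact ⟨0, 1, by simp [psiFun, h, lt_irrefl]⟩
    · exact ⟨(post ⟨j, h⟩).1, (post ⟨j, h⟩).2, by simp [psiFun, h, not_lt.mpr h.le]⟩

lemma psiFun_comm {k : ℕ} (d : TData F k) (i j : Fin k) :
    Commute (psiFun d i) (psiFun d j) := by
  obtain ⟨C, hC⟩ := psiFun_lin d
  obtain ⟨a, b, hab⟩ := hC i
  obtain ⟨a', b', hab'⟩ := hC j
  rw [Commute, SemiconjBy, hab, hab']
  exact comm_lin a b a' b' C

def Psi {k : ℕ} (d : TData F k) : CommTuple₂ F k := ⟨psiFun d, psiFun_comm d⟩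

lemma isSc_eval {A : M₂} (h : IsSc A) : (A 0 0) • (1:M₂) = A := by
  obtain ⟨c, rfl⟩ := h
  simp [Matrix.smul_apply, Matrix.one_apply]

lemma find_eq_find {n : ℕ} (p q : Fin n → Prop) [DecidablePred p] [DecidablePred q]
    (h : ∀ i, p i ↔ q i) : findOpt p = findOpt q := by
  rcases hp : findOpt p with _ | i
  · symm
    rw [findOpt_eq_none_iff] at hp ⊢
    exact fun i hq => hp i ((h i).mpr hq)
  · symm
    rw [findOpt_eq_some_iff] at hp ⊢
    exact ⟨(h i).mp hp.1, fun j hj => hp.2 j ((h j).mpr hj)⟩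


open Classical in
lemma phi_invariant {k : ℕ} (v w : CommTuple₂ F k) (h : simConj₂ F k v w) :
    Phi v = Phi w := by
  obtain ⟨g, hg⟩ := h
  have hsc : ∀ i, (¬ IsSc (v.1 i)) ↔ (¬ IsSc (w.1 i)) := by
    intro i
    rw [← hg i, isSc_conj_iff]
  have hfind : findOpt (fun i => ¬ IsSc (v.1 i)) = findOpt (fun i => ¬ IsSc (w.1 i)) :=
    find_eq_find _ _ hsc
  unfold Phi
  rw [hfind]
  rcases hw : findOpt (fun i => ¬ IsSc (w.1 i)) with _ | i₀
  · rw [findOpt_eq_none_iff] at hw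
    refine congrArg Sum.inl (funext fun i => ?_)
    have hvi : IsSc (v.1 i) := not_not.mp (fun hh => hw i ((hsc i).mp hh))
    rw [← hg i, conj_of_isSc g hvi]
  · rw [findOpt_eq_some_iff] at hw
    refine congrArg Sum.inr (congrArg (Sigma.mk i₀) ?_)
    refine Prod.ext ?_ (Prod.ext ?_ ?_)
    · funext j
      have hvj : IsSc (v.1 j.1) := by
        by_contra hh
        exact absurd (hw.2 j.1 ((hsc j.1).mp hh)) (not_le.mpr j.2)
      show v.1 j.1 0 0 = w.1 j.1 0 0
      rw [← hg j.1, conj_of_isSc g hvj]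
    · refine Prod.ext ?_ ?_
      · show v.1 i₀ 0 0 + v.1 i₀ 1 1 = w.1 i₀ 0 0 + w.1 i₀ 1 1
        rw [← hg i₀, trace_conj]
      · show (v.1 i₀).det = (w.1 i₀).det
        rw [← hg i₀, det_conj]
    · funext j
      show ab (v.1 i₀) (v.1 j.1) = ab (w.1 i₀) (w.1 j.1)
      have hvns : ¬ IsSc (v.1 i₀) := (hsc i₀).mpr hw.1
      have hspec := ab_spec hvns (v.2 i₀ j.1).eq
      have hw' : w.1 j.1 = (ab (v.1 i₀) (v.1 j.1)).1 • (1:M₂) +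
          (ab (v.1 i₀) (v.1 j.1)).2 • w.1 i₀ := by
        rw [← hg j.1, ← hg i₀]
        conv_lhs => rw [hspec]
        exact conj_lin g _ _ _
      rw [ab_eq hw.1 hw']

open Classical in
lemma phi_psi {k : ℕ} (d : TData F k) : Phi (Psi d) = d := by
  rcases d with c | ⟨i₀, pre, td, post⟩
  · have hfind : findOpt (fun i => ¬ IsSc ((Psi (Sum.inl c : TData F k)).1 i)) = none := by
      rw [findOpt_eq_none_iff]
      intro i
      rw [not_not, Psi]
      exact ⟨c i, rfl⟩
    unfold Phi
    rw [hfind]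
    refine congrArg Sum.inl (funext fun i => ?_)
    show psiFun (Sum.inl c : TData F k) i 0 0 = c i
    rw [psiFun_inl]
    simp [Matrix.smul_apply, Matrix.one_apply]
  · have hfind : findOpt
        (fun i => ¬ IsSc ((Psi (Sum.inr ⟨i₀, pre, td, post⟩ : TData F k)).1 i)) = some i₀ := by
      rw [findOpt_eq_some_iff]
      constructor
      · show ¬ IsSc (psiFun (Sum.inr ⟨i₀, pre, td, post⟩ : TData F k) i₀)
        rw [psiFun_self]
        exact comp_nonsc _ _
      · intro j hj
        by_contra hlt
        push_neg at hlt
        apply hj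
        show IsSc (psiFun (Sum.inr ⟨i₀, pre, td, post⟩ : TData F k) j)
        rw [psiFun_lt pre td post hlt]
        exact ⟨pre ⟨j, hlt⟩, rfl⟩
    unfold Phi
    rw [hfind]
    refine congrArg Sum.inr (congrArg (Sigma.mk i₀) ?_)
    refine Prod.ext ?_ (Prod.ext ?_ ?_)
    · funext j
      show psiFun (Sum.inr ⟨i₀, pre, td, post⟩ : TData F k) j.1 0 0 = pre j
      rw [psiFun_lt pre td post j.2]
      simp [Matrix.smul_apply, Matrix.one_apply]
    · show (psiFun (Sum.inr ⟨i₀, pre, td, post⟩ : TData F k) i₀ 0 0 +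
        psiFun (Sum.inr ⟨i₀, pre, td, post⟩ : TData F k) i₀ 1 1,
        (psiFun (Sum.inr ⟨i₀, pre, td, post⟩ : TData F k) i₀).det) = td
      rw [psiFun_self, comp_trace, comp_det]
    · funext j
      show ab (psiFun (Sum.inr ⟨i₀, pre, td, post⟩ : TData F k) i₀)
        (psiFun (Sum.inr ⟨i₀, pre, td, post⟩ : TData F k) j.1) = post j
      rw [psiFun_self]
      rw [ab_eq (comp_nonsc td.1 td.2) (psiFun_gt pre td post j.2)]

open Classical in
lemma psi_phi {k : ℕ} (v : CommTuple₂ F k) : simConj₂ F k (Psi (Phi v)) v := by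
  rcases hfind : findOpt (fun i => ¬ IsSc (v.1 i)) with _ | i₀
  · refine ⟨1, fun i => ?_⟩
    have hsc : IsSc (v.1 i) := not_not.mp (findOpt_eq_none_iff.mp hfind i)
    have h1 : Phi v = Sum.inl (fun i => v.1 i 0 0) := by
      unfold Phi
      rw [hfind]
    rw [h1]
    show (1 : GL (Fin 2) F).1 * psiFun (Sum.inl (fun i => v.1 i 0 0) : TData F k) i *
      ((1 : GL (Fin 2) F)⁻¹).1 = v.1 i
    rw [psiFun_inl, inv_one]
    show (1:M₂) * _ * (1:M₂) = v.1 i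
    rw [one_mul, mul_one, isSc_eval hsc]
  · obtain ⟨hns, hmin⟩ := findOpt_eq_some_iff.mp hfind
    obtain ⟨g, hg⟩ := conj_comp hns
    have h1 : Phi v = Sum.inr ⟨i₀, fun j => v.1 j.1 0 0,
        (v.1 i₀ 0 0 + v.1 i₀ 1 1, (v.1 i₀).det),
        fun j => ab (v.1 i₀) (v.1 j.1)⟩ := by
      unfold Phi
      rw [hfind]
    refine ⟨g, fun j => ?_⟩
    rw [h1]
    show (g : M₂) * psiFun (Sum.inr ⟨i₀, fun j => v.1 j.1 0 0,
        (v.1 i₀ 0 0 + v.1 i₀ 1 1, (v.1 i₀).det),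
        fun j => ab (v.1 i₀) (v.1 j.1)⟩ : TData F k) j *
      ((g⁻¹ : GL (Fin 2) F) : M₂) = v.1 j
    rcases lt_trichotomy j i₀ with h | h | h
    · rw [psiFun_lt _ _ _ h, conj_smul_one]
      have hsc : IsSc (v.1 j) := by
        by_contra hh
        exact absurd (hmin j hh) (not_le.mpr h)
      exact isSc_eval hsc
    · subst h
      rw [psiFun_self]
      exact hg
    · rw [psiFun_gt _ _ _ h, conj_lin, hg]
      exact (ab_spec hns (v.2 i₀ j).eq).symm


noncomputable def quotEquiv (k : ℕ) : Quot (simConj₂ F k) ≃ TData F k where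
  toFun := Quot.lift Phi (fun v w h => phi_invariant v w h)
  invFun := fun d => Quot.mk _ (Psi d)
  left_inv := by
    rintro ⟨v⟩
    exact Quot.sound (psi_phi v)
  right_inv := phi_psi

lemma card_sub_lt {k : ℕ} (i : Fin k) : Fintype.card {j : Fin k // j < i} = i := by
  rw [← Fin.card_Iio i, ← Fintype.card_coe]
  exact Fintype.card_congr (Equiv.subtypeEquivRight fun j => by simp)

lemma card_sub_gt {k : ℕ} (i : Fin k) : Fintype.card {j : Fin k // i < j} = k - 1 - i := by
  rw [← Fin.card_Ioi i, ← Fintype.card_coe]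
  exact Fintype.card_congr (Equiv.subtypeEquivRight fun j => by simp)

variable [Fintype F]

lemma card_TData (k : ℕ) : Fintype.card (TData F k) =
    Fintype.card F ^ k + ∑ i : Fin k, Fintype.card F ^ (i : ℕ) *
      ((Fintype.card F ^ 2) * (Fintype.card F ^ 2) ^ (k - 1 - (i : ℕ))) := by
  classical
  rw [show Fintype.card (TData F k) = Fintype.card ((Fin k → F) ⊕
      (Σ i₀ : Fin k, ({j : Fin k // j < i₀} → F) × (F × F) ×
        ({j : Fin k // i₀ < j} → F × F))) from rfl,
    Fintype.card_sum, Fintype.card_sigma]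
  congr 1
  · rw [Fintype.card_fun, Fintype.card_fin]
  · refine Finset.sum_congr rfl fun i _ => ?_
    simp only [Fintype.card_prod, Fintype.card_fun, card_sub_lt, card_sub_gt]
    ring

lemma card_quot (k : ℕ) : (Nat.card (Quot (simConj₂ F k)) : ℤ) =
    ∑ p ∈ Finset.HasAntidiagonal.antidiagonal k,
      (Fintype.card F : ℤ) ^ p.1 * ((Fintype.card F : ℤ) ^ 2) ^ p.2 := by
  classical
  rw [Nat.card_congr (quotEquiv k), Nat.card_eq_fintype_card, card_TData,
    Finset.Nat.sum_antidiagonal_eq_sum_range_succ_mk, Finset.sum_range_succ]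
  push_cast
  rw [Fin.sum_univ_eq_sum_range (fun n => ((Fintype.card F : ℤ)) ^ n *
    ((Fintype.card F : ℤ) ^ 2 * ((Fintype.card F : ℤ) ^ 2) ^ (k - 1 - n))) k]
  rw [add_comm]
  congr 1
  · refine Finset.sum_congr rfl fun i hi => ?_
    have hik : i < k := Finset.mem_range.mp hi
    have h1 : k - 1 - i + 1 = k - i := by omega
    rw [← pow_succ', ← pow_mul, ← pow_mul, h1]
  · simp

lemma geom_series (a : ℤ) :
    (PowerSeries.mk fun n => a ^ n) * (1 - PowerSeries.C a * PowerSeries.X) = 1 := by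
  ext n
  rw [mul_sub, mul_one, map_sub]
  cases n with
  | zero =>
    simp [PowerSeries.coeff_zero_eq_constantCoeff]
  | succ n =>
    rw [show (PowerSeries.mk fun n => a ^ n) * (PowerSeries.C a * PowerSeries.X) =
      ((PowerSeries.mk fun n => a ^ n) * PowerSeries.C a) * PowerSeries.X by ring]
    rw [PowerSeries.coeff_succ_mul_X, PowerSeries.coeff_mul_C, PowerSeries.coeff_mk,
      PowerSeries.coeff_mk]
    simp [pow_succ, PowerSeries.coeff_one]

end Aux


/-- `∑_{k≥0} c_{2,k}(q) tᵏ = 1/((1−qt)(1−q²t))`: the generating function of the numbers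
of simultaneous similarity classes of commuting `k`-tuples of `2 × 2` matrices over
`𝔽_q` (with `c_{2,0} = 1`), multiplied by `(1−qt)(1−q²t)`, equals `1` in `ℤ[[t]]`. -/
theorem c2k_genfun (F : Type) [Field F] [Fintype F] :
    (PowerSeries.mk fun k => (Nat.card (Quot (simConj₂ F k)) : ℤ)) *
        ((1 - PowerSeries.C (Fintype.card F : ℤ) * PowerSeries.X) *
         (1 - PowerSeries.C ((Fintype.card F : ℤ) ^ 2) * PowerSeries.X)) = 1 := by
  have hmk : (PowerSeries.mk fun k => (Nat.card (Quot (simConj₂ F k)) : ℤ)) =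
      (PowerSeries.mk fun n => (Fintype.card F : ℤ) ^ n) *
      (PowerSeries.mk fun n => ((Fintype.card F : ℤ) ^ 2) ^ n) := by
    ext n
    rw [PowerSeries.coeff_mul, PowerSeries.coeff_mk]
    rw [card_quot]
    exact Finset.sum_congr rfl fun p _ => by rw [PowerSeries.coeff_mk, PowerSeries.coeff_mk]
  rw [hmk]
  calc ((PowerSeries.mk fun n => (Fintype.card F : ℤ) ^ n) *
      (PowerSeries.mk fun n => ((Fintype.card F : ℤ) ^ 2) ^ n)) *
        ((1 - PowerSeries.C (Fintype.card F : ℤ) * PowerSeries.X) *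
         (1 - PowerSeries.C ((Fintype.card F : ℤ) ^ 2) * PowerSeries.X))
      = ((PowerSeries.mk fun n => (Fintype.card F : ℤ) ^ n) *
          (1 - PowerSeries.C (Fintype.card F : ℤ) * PowerSeries.X)) *
        ((PowerSeries.mk fun n => ((Fintype.card F : ℤ) ^ 2) ^ n) *
          (1 - PowerSeries.C ((Fintype.card F : ℤ) ^ 2) * PowerSeries.X)) := by ring
    _ = 1 := by rw [geom_series, geom_series, one_mul]
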